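/- Let $b : [0,1]^2 \to \mathbb{R}$ be a $C^2$ nowhere vanishing function, and suppose the determinant $b(x-s, y+s)\,b(x',y) - b(x,y)\,b(x'-s, y+s)$ vanishes identically for all $(x, x', s, y)$ in an open set. Then locally $b$ factors as $b(x,y) = h(x+y)\,k(y)$ for some smooth nowhere vanishing functions $h, k$ of one variable. -/

import Mathlib

theorem stmt16 (b : ℝ × ℝ → ℝ) (hb : ContDiff ℝ 2 b) (hnv : ∀ q, b q ≠ 0)
    (W : Set (ℝ × ℝ × ℝ × ℝ)) (hW : IsOpen W) (hWne : W.Nonempty)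
    (hdet : ∀ w ∈ W,
      b (w.1 - w.2.2.1, w.2.2.2 + w.2.2.1) * b (w.2.1, w.2.2.2) -
        b (w.1, w.2.2.2) * b (w.2.1 - w.2.2.1, w.2.2.2 + w.2.2.1) = 0) :
    ∃ (V : Set (ℝ × ℝ)) (h k : ℝ → ℝ), IsOpen V ∧ V.Nonempty ∧
      V ⊆ {q : ℝ × ℝ | ∃ x' s : ℝ, (q.1, x', s, q.2) ∈ W} ∧
      ContDiff ℝ 2 h ∧ ContDiff ℝ 2 k ∧
      ∀ q ∈ V, h (q.1 + q.2) ≠ 0 ∧ k q.2 ≠ 0 ∧ b q = h (q.1 + q.2) * k q.2 := by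
  obtain ⟨p, hp⟩ := hWne
  obtain ⟨x₀, x₀', s₀, y₀⟩ := p
  obtain ⟨ε, hε, hball⟩ := Metric.isOpen_iff.mp hW _ hp
  -- membership lemmas
  have hmem : ∀ x x' s y : ℝ, |x - x₀| < ε → |x' - x₀'| < ε → |s - s₀| < ε →
      |y - y₀| < ε → (x, x', s, y) ∈ W := by
    intro x x' s y h1 h2 h3 h4
    apply hball
    simp only [Metric.mem_ball, Prod.dist_eq, Real.dist_eq]
    simp only [max_lt_iff]
    exact ⟨h1, h2, h3, h4⟩
  refine ⟨Metric.ball (x₀, y₀) (ε/2),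
    fun t => b (t - y₀, y₀),
    fun y => b (x₀' - y - s₀ + y₀, y + s₀) * b (x₀', y) /
      (b (x₀', y₀) * b (x₀' - s₀, y + s₀)),
    Metric.isOpen_ball, Metric.nonempty_ball.mpr (by linarith), ?_, ?_, ?_, ?_⟩
  · rintro ⟨x, y⟩ hq
    simp only [Metric.mem_ball, Prod.dist_eq, Real.dist_eq, max_lt_iff] at hq
    exact ⟨x₀', s₀, hmem x x₀' s₀ y (by linarith [hq.1]) (by simp [hε]) (by simp [hε])
      (by linarith [hq.2])⟩
  · exact hb.comp ((contDiff_id.sub contDiff_const).prodMk contDiff_const)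
  · apply ContDiff.div
    · exact (hb.comp ((((contDiff_const.sub contDiff_id).sub contDiff_const).add
        contDiff_const).prodMk (contDiff_id.add contDiff_const))).mul
        (hb.comp (contDiff_const.prodMk contDiff_id))
    · exact contDiff_const.mul
        (hb.comp (contDiff_const.prodMk (contDiff_id.add contDiff_const)))
    · intro y
      exact mul_ne_zero (hnv _) (hnv _)
  · rintro ⟨x, y⟩ hq
    simp only [Metric.mem_ball, Prod.dist_eq, Real.dist_eq, max_lt_iff] at hq
    obtain ⟨hx, hy⟩ := hq
    refine ⟨hnv _, div_ne_zero (mul_ne_zero (hnv _) (hnv _)) (mul_ne_zero (hnv _) (hnv _)), ?_⟩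
    have hA := hdet (x, x₀', s₀, y) (hmem x x₀' s₀ y (by linarith) (by simp [hε])
      (by simp [hε]) (by linarith))
    have hsum : |x + y - y₀ - x₀| < ε := by
      rw [show x + y - y₀ - x₀ = (x - x₀) + (y - y₀) by ring]
      calc |(x - x₀) + (y - y₀)| ≤ |x - x₀| + |y - y₀| := abs_add_le _ _
        _ < ε := by linarith
    have hB := hdet (x + y - y₀, x₀', y + s₀ - y₀, y₀)
      (hmem _ _ _ _ hsum (by simp [hε])
        (by rw [show y + s₀ - y₀ - s₀ = y - y₀ by ring]; linarith) (by simp [hε]))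
    dsimp only at hA hB ⊢
    have e1 : x + y - y₀ - (y + s₀ - y₀) = x - s₀ := by ring
    have e2 : y₀ + (y + s₀ - y₀) = y + s₀ := by ring
    have e3 : x₀' - (y + s₀ - y₀) = x₀' - y - s₀ + y₀ := by ring
    rw [e1, e2, e3] at hB
    have h1 := hnv (x₀', y₀)
    have h2 := hnv (x₀' - s₀, y + s₀)
    field_simp
    linear_combination (- b (x₀', y₀)) * hA + b (x₀', y) * hB
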